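/- Let T be a finite-dimensional real inner product space with inner product J, and g = W* J W a positive quadratic form on T with W self-adjoint positive and tr W = 1. Let W have spectral decomposition W = Σ_i W_i e_i⊗e_i with ‖e_i‖ = 1. Then the convex combination measure p = Σ_i W_i δ_{(W_i⁻¹ e_i, J⁻¹ e_i)} on T × T* satisfies: ∫∫ ⟨X, a(x)⟩ dp(x,X) = tr a for all a ∈ End(T), and ∫∫ g(x,x)‖X‖² dp(x,X) = 1, and the resulting covariance matrix ∫∫ ‖X‖² x⊗x dp(x,X) equals W⁻¹J. -/

import Mathlib

open scoped InnerProductSpace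
open Finset

lemma trace_inner_aux {T : Type*} [NormedAddCommGroup T] [InnerProductSpace ℝ T]
    [FiniteDimensional ℝ T] {n : ℕ} (ob : OrthonormalBasis (Fin n) ℝ T)
    (a : Module.End ℝ T) :
    LinearMap.trace ℝ T a = ∑ i, ⟪ob i, a (ob i)⟫_ℝ := by
  rw [LinearMap.trace_eq_matrix_trace ℝ ob.toBasis, Matrix.trace]
  simp [Matrix.diag, LinearMap.toMatrix_apply, OrthonormalBasis.coe_toBasis_repr_apply,
    OrthonormalBasis.repr_apply_apply]

/-- Let `T` be a finite-dimensional real inner product space (inner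
product `J`), `W` a positive self-adjoint endomorphism with `tr W = 1` and
spectral decomposition `W = ∑ i, w i • (e i ⊗ e i)` with `e` orthonormal and
`‖e i‖ = 1`.  The convex combination `p = ∑ i, w i • δ_{(wᵢ⁻¹ eᵢ, J⁻¹ eᵢ)}`
(here `T*` is identified with `T` via `J`) satisfies local unbiasedness
`∫∫ ⟨X, a x⟩ dp = tr a` for every `a ∈ End T`, its deviation
`∫∫ g(x,x)‖X‖² dp` equals `1` (with `g = W*JW`), and its covariance
`∫∫ ‖X‖² x⊗x dp` equals `W⁻¹J`. -/
theorem stmt11 {T : Type*} [NormedAddCommGroup T] [InnerProductSpace ℝ T]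
    [FiniteDimensional ℝ T] {n : ℕ} (hn : Module.finrank ℝ T = n)
    (W : Module.End ℝ T)
    (hWsa : ∀ u v : T, ⟪W u, v⟫_ℝ = ⟪u, W v⟫_ℝ)
    (hWpos : ∀ u : T, u ≠ 0 → 0 < ⟪W u, u⟫_ℝ)
    (htrW : LinearMap.trace ℝ T W = 1)
    (e : Fin n → T) (he : Orthonormal ℝ e)
    (w : Fin n → ℝ) (hwpos : ∀ i, 0 < w i) (hWe : ∀ i, W (e i) = w i • e i)
    (Winv : Module.End ℝ T) (hWinv : Winv * W = 1) (hWinv' : W * Winv = 1) :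
    (∀ a : Module.End ℝ T,
        ∑ i, w i * ⟪e i, a ((w i)⁻¹ • e i)⟫_ℝ = LinearMap.trace ℝ T a) ∧
    (∑ i, w i * (⟪W ((w i)⁻¹ • e i), W ((w i)⁻¹ • e i)⟫_ℝ * ‖e i‖ ^ 2) = 1) ∧
    (∀ u v : T,
        ∑ i, w i * ‖e i‖ ^ 2 *
          (⟪(w i)⁻¹ • e i, u⟫_ℝ * ⟪(w i)⁻¹ • e i, v⟫_ℝ) = ⟪Winv u, v⟫_ℝ) := by
  have hw0 : ∀ i, w i ≠ 0 := fun i => (hwpos i).ne'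
  have hcard : Fintype.card (Fin n) = Module.finrank ℝ T := by simp [hn]
  have hsp : ⊤ ≤ Submodule.span ℝ (Set.range e) :=
    (he.linearIndependent.span_eq_top_of_card_eq_finrank' hcard).ge
  let ob := OrthonormalBasis.mk he hsp
  have hobe : ∀ i, ob i = e i := fun i => by simp [ob]
  have hnorm : ∀ i, ‖e i‖ = 1 := fun i => he.1 i
  have hinner : ∀ i, ⟪e i, e i⟫_ℝ = 1 := fun i => by
    rw [real_inner_self_eq_norm_sq, hnorm i]; norm_num
  -- trace formula
  have htr : ∀ a : Module.End ℝ T,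
      LinearMap.trace ℝ T a = ∑ i, ⟪e i, a (e i)⟫_ℝ := fun a => by
    rw [trace_inner_aux ob a]; exact Finset.sum_congr rfl fun i _ => by rw [hobe]
  have part1 : ∀ a : Module.End ℝ T,
      ∑ i, w i * ⟪e i, a ((w i)⁻¹ • e i)⟫_ℝ = LinearMap.trace ℝ T a := by
    intro a
    rw [htr a]
    refine Finset.sum_congr rfl fun i _ => ?_
    rw [map_smul, inner_smul_right, ← mul_assoc, mul_inv_cancel₀ (hw0 i), one_mul]
  have hWterm : ∀ i, W ((w i)⁻¹ • e i) = e i := fun i => by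
    rw [map_smul, hWe, smul_smul, inv_mul_cancel₀ (hw0 i), one_smul]
  have hsumw : ∑ i, w i = 1 := by
    rw [← htrW, htr W]
    exact Finset.sum_congr rfl fun i _ => by
      rw [hWe, inner_smul_right, hinner, mul_one]
  refine ⟨part1, ?_, ?_⟩
  · rw [← hsumw]
    refine Finset.sum_congr rfl fun i _ => ?_
    rw [hWterm, hinner, hnorm]; norm_num
  · intro u v
    have key : ∀ i, ⟪Winv u, e i⟫_ℝ = (w i)⁻¹ * ⟪u, e i⟫_ℝ := by
      intro i
      have : ⟪Winv u, e i⟫_ℝ = ⟪Winv u, W ((w i)⁻¹ • e i)⟫_ℝ := by rw [hWterm]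
      rw [this, ← hWsa]
      have : W (Winv u) = u := by
        have := congrArg (fun f : Module.End ℝ T => f u) hWinv'
        simpa using this
      rw [this, inner_smul_right]
    rw [← OrthonormalBasis.sum_inner_mul_inner ob (Winv u) v]
    refine Finset.sum_congr rfl fun i _ => ?_
    rw [hobe, key i, inner_smul_left, inner_smul_left, hnorm,
      real_inner_comm (e i) u]
    field_simp
    rw [conj_trivial, one_div, div_eq_mul_inv, sq, ← mul_assoc, mul_inv_cancel₀ (hw0 i), one_mul]
    ring
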